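/- Let A be a finite-dimensional, unital, associative algebra over ℂ. If there exists a diagonal in the algebraic tensor product A ⊗ A, then A is a semisimple ring. -/

import Mathlib

open scoped TensorProduct

/-- If a finite-dimensional unital complex algebra `A` has a diagonal
`Σᵢ aᵢ ⊗ bᵢ` in the algebraic tensor product `A ⊗ A` (so `Σᵢ aᵢbᵢ = 1` and
`Σᵢ (c·aᵢ) ⊗ bᵢ = Σᵢ aᵢ ⊗ (bᵢ·c)` for all `c`), then `A` is a semisimple ring. -/
theorem findim_algebra_with_diagonal_is_semisimple
    (A : Type) [Ring A] [Algebra ℂ A] [FiniteDimensional ℂ A]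
    (ι : Type) [Fintype ι] (a b : ι → A)
    (h1 : ∑ i, a i * b i = 1)
    (h2 : ∀ c : A, ∑ i, (c * a i) ⊗ₜ[ℂ] b i = ∑ i, a i ⊗ₜ[ℂ] (b i * c)) :
    IsSemisimpleRing A := by
  refine (isSemisimpleModule_iff A A).mpr ⟨?_⟩
  intro N
  -- ℂ-linear projection onto N.restrictScalars ℂ
  obtain ⟨Q, hQ⟩ := Submodule.exists_isCompl (N.restrictScalars ℂ)
  set π : A →ₗ[ℂ] (N.restrictScalars ℂ) := (N.restrictScalars ℂ).linearProjOfIsCompl Q hQ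
  -- the averaged projection
  set q : A → A := fun m => ∑ i, a i * (π (b i * m) : A) with hq
  have hmem : ∀ m, q m ∈ N := fun m =>
    Submodule.sum_mem N fun i _ => N.smul_mem (a i) (π (b i * m)).2
  have hid : ∀ n ∈ N, q n = n := by
    intro n hn
    have : ∀ i, (π (b i * n) : A) = b i * n := fun i => by
      have : b i * n ∈ N.restrictScalars ℂ := N.smul_mem (b i) hn
      exact congrArg Subtype.val (Submodule.projectionOnto_apply_left hQ ⟨_, this⟩)
    simp only [hq, this, ← mul_assoc]
    rw [← Finset.sum_mul, h1, one_mul]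
  have hadd : ∀ m m', q (m + m') = q m + q m' := by
    intro m m'
    simp only [hq, mul_add, map_add, Submodule.coe_add]
    rw [← Finset.sum_add_distrib]
  have hsmul : ∀ (c m : A), q (c * m) = c * q m := by
    intro c m
    -- use the bilinear map x ⊗ y ↦ x * π(y * m)
    let φ : A →ₗ[ℂ] A →ₗ[ℂ] A :=
      { toFun := fun x =>
          { toFun := fun y => x * (π (y * m) : A)
            map_add' := fun y y' => by simp [add_mul, mul_add]
            map_smul' := fun r y => by simp [smul_mul_assoc, mul_smul_comm] }
        map_add' := fun x x' => by ext y; simp [add_mul]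
        map_smul' := fun r x => by ext y; simp [smul_mul_assoc] }
    have := congrArg (TensorProduct.lift φ) (h2 c)
    simp only [map_sum, TensorProduct.lift.tmul] at this
    simp only [φ, LinearMap.coe_mk, AddHom.coe_mk] at this
    simp only [hq]
    simp only [← mul_assoc] at this ⊢
    rw [← this, Finset.mul_sum]; simp only [mul_assoc]
  let p : A →ₗ[A] N :=
    { toFun := fun m => ⟨q m, hmem m⟩
      map_add' := fun m m' => Subtype.ext (hadd m m')
      map_smul' := fun c m => Subtype.ext (hsmul c m) }
  have hp : ∀ x : N, p x = x := fun x => Subtype.ext (hid x x.2)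
  exact ⟨LinearMap.ker p, LinearMap.isCompl_of_proj hp⟩
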